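/- For every nonnegative integer k, the terminating hypergeometric sum ∑_{n=0}^{k} ((1/2)_n^2 (-k)_n)/(n!^2 (3/2+k)_n) * (4n+1) * (-1)^n equals Γ(3/2+k)/(Γ(3/2) Γ(1+k)). -/

import Mathlib

open Finset

/-- Rising factorial (Pochhammer symbol) over the reals. -/
noncomputable def poch (a : ℝ) (n : ℕ) : ℝ := ∏ i ∈ Finset.range n, (a + i)

lemma poch_zero (a : ℝ) : poch a 0 = 1 := by simp [poch]

lemma poch_succ (a : ℝ) (n : ℕ) : poch a (n + 1) = poch a n * (a + n) := by
  simp [poch, Finset.prod_range_succ]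

lemma poch_succ' (a : ℝ) (n : ℕ) : poch a (n + 1) = a * poch (a + 1) n := by
  rw [poch, Finset.prod_range_succ', poch]
  have h : ∀ i ∈ Finset.range n, a + (↑(i + 1) : ℝ) = (a + 1) + i := by
    intro i _; push_cast; ring
  rw [Finset.prod_congr rfl h]
  push_cast
  ring

lemma poch_pos {a : ℝ} (ha : 0 < a) (n : ℕ) : 0 < poch a n := by
  apply Finset.prod_pos
  intro i _
  positivity

lemma poch_neg_nat_eq_zero (k : ℕ) : poch (-(k : ℝ)) (k + 1) = 0 := by
  apply Finset.prod_eq_zero (Finset.self_mem_range_succ k)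
  simp

/-- The general term of the sum. -/
noncomputable def T (k n : ℕ) : ℝ :=
  (poch (1/2) n) ^ 2 * poch (-(k : ℝ)) n /
    ((n.factorial : ℝ) ^ 2 * poch (3/2 + k) n) * (4 * n + 1) * (-1) ^ n

/-- WZ certificate. -/
noncomputable def Gc (k : ℕ) : ℕ → ℝ
  | 0 => 0
  | (m + 1) => (2 * k + 3) * (m + 1) ^ 2 * (-1) ^ (m + 1) * (poch (1/2) (m + 1)) ^ 2 *
      poch (-(k : ℝ)) m / ((k + 1) * ((m + 1).factorial : ℝ) ^ 2 * poch (3/2 + k) (m + 1))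

set_option maxHeartbeats 1000000 in
lemma step (k n : ℕ) :
    T (k + 1) n - (3/2 + k) / (k + 1) * T k n = Gc k (n + 1) - Gc k n := by
  have hk1 : ((k : ℝ) + 1) ≠ 0 := by positivity
  have hk2 : (3/2 + (k : ℝ)) ≠ 0 := by positivity
  cases n with
  | zero =>
      simp only [T, Gc, poch_zero, poch_succ, poch_zero]
      norm_num
      field_simp
      ring
  | succ m =>
      have hR : poch (3/2 + (k : ℝ)) m ≠ 0 := ne_of_gt (poch_pos (by positivity) m)
      have hRm : (3/2 + (k : ℝ) + m) ≠ 0 := by positivity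
      have hRm2 : (3/2 + (k : ℝ) + (m + 1)) ≠ 0 := by positivity
      have hM : ((m.factorial : ℝ)) ≠ 0 := by exact_mod_cast m.factorial_ne_zero
      have hm1 : ((m : ℝ) + 1) ≠ 0 := by positivity
      have hm2 : ((m : ℝ) + 2) ≠ 0 := by positivity
      -- rewrite shifted pochhammers
      have e1 : poch (-(↑(k + 1) : ℝ)) (m + 1) = -(k + 1) * poch (-(k : ℝ)) m := by
        rw [poch_succ']
        push_cast
        ring_nf
      have e2 : poch (3/2 + (↑(k + 1) : ℝ)) (m + 1)
          = poch (3/2 + (k : ℝ)) (m + 1) * (3/2 + k + (m + 1)) / (3/2 + k) := by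
        have h : (3/2 + (k : ℝ)) * poch ((3/2 + (k : ℝ)) + 1) (m + 1)
            = poch (3/2 + (k : ℝ)) (m + 1) * (3/2 + k + (m + 1)) := by
          rw [← poch_succ', poch_succ]; push_cast; ring
        have hc : (3/2 + (↑(k + 1) : ℝ)) = (3/2 + (k : ℝ)) + 1 := by push_cast; ring
        rw [hc, eq_div_iff hk2]
        linear_combination h
      simp only [T, Gc, e1, e2, poch_succ (3/2 + (k : ℝ)) (m + 1),
        poch_succ (3/2 + (k : ℝ)) m, poch_succ (-(k : ℝ)) m,
        poch_succ (1/2 : ℝ) (m + 1), poch_succ (1/2 : ℝ) m,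
        Nat.factorial_succ, pow_succ]
      push_cast
      set P := poch (1/2 : ℝ) m with hP
      set Q := poch (-(k : ℝ)) m with hQ
      set R := poch (3/2 + (k : ℝ)) m with hRd
      set M := (m.factorial : ℝ) with hMd
      field_simp
      ring

lemma sum_eq (k : ℕ) :
    ∑ n ∈ Finset.range (k + 1), T k n
      = Real.Gamma (3/2 + k) / (Real.Gamma (3/2) * Real.Gamma (1 + k)) := by
  induction k with
  | zero =>
      simp [T, poch_zero, Real.Gamma_one]
      rw [div_self (ne_of_gt (Real.Gamma_pos_of_pos (by norm_num)))]
  | succ k ih =>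
      have hk1 : ((k : ℝ) + 1) ≠ 0 := by positivity
      have hTk : T k (k + 1) = 0 := by
        simp [T, poch_neg_nat_eq_zero k]
      have hGtop : Gc k (k + 2) = 0 := by
        simp [Gc, poch_neg_nat_eq_zero k]
      have key : ∑ n ∈ Finset.range (k + 2), (T (k + 1) n - (3/2 + k) / (k + 1) * T k n)
          = Gc k (k + 2) - Gc k 0 := by
        rw [Finset.sum_congr rfl (fun n _ => step k n)]
        exact Finset.sum_range_sub (Gc k) (k + 2)
      rw [Finset.sum_sub_distrib, ← Finset.mul_sum, hGtop] at key
      have hsum2 : ∑ n ∈ Finset.range (k + 2), T k n = ∑ n ∈ Finset.range (k + 1), T k n := by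
        rw [Finset.sum_range_succ, hTk, add_zero]
      rw [hsum2, ih] at key
      have hG0 : Gc k 0 = 0 := rfl
      rw [hG0, sub_zero, sub_eq_zero] at key
      rw [key]
      have hGam1 : Real.Gamma (3/2 + (↑(k + 1) : ℝ)) = (3/2 + k) * Real.Gamma (3/2 + k) := by
        have : (3/2 + (↑(k + 1) : ℝ)) = (3/2 + (k : ℝ)) + 1 := by push_cast; ring
        rw [this, Real.Gamma_add_one (by positivity)]
      have hGam2 : Real.Gamma (1 + (↑(k + 1) : ℝ)) = ((k : ℝ) + 1) * Real.Gamma (1 + k) := by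
        have : (1 + (↑(k + 1) : ℝ)) = (1 + (k : ℝ)) + 1 := by push_cast; ring
        rw [this, Real.Gamma_add_one (by positivity)]
        ring_nf
      rw [hGam1, hGam2]
      have hg1 : Real.Gamma (3/2 + (k : ℝ)) ≠ 0 := ne_of_gt (Real.Gamma_pos_of_pos (by positivity))
      have hg2 : Real.Gamma (1 + (k : ℝ)) ≠ 0 := ne_of_gt (Real.Gamma_pos_of_pos (by positivity))
      have hg3 : Real.Gamma (3/2) ≠ 0 := ne_of_gt (Real.Gamma_pos_of_pos (by positivity))
      field_simp

theorem terminating_hypergeometric_sum (k : ℕ) :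
    ∑ n ∈ Finset.range (k + 1),
        (poch (1/2) n) ^ 2 * poch (-(k : ℝ)) n /
          ((n.factorial : ℝ) ^ 2 * poch (3/2 + k) n) * (4 * n + 1) * (-1) ^ n
      = Real.Gamma (3/2 + k) / (Real.Gamma (3/2) * Real.Gamma (1 + k)) := by
  exact sum_eq k
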